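/- Let T_0 < T_1 be reals and let Δv and Δq be reals. Then there exist reals a and b such that the affine function u*(t) = a·t + b satisfies ∫_{T_0}^{T_1} u*(t) dt = Δv and ∫_{T_0}^{T_1} (T_1 − t)·u*(t) dt = Δq; and for every continuous function u : [T_0, T_1] → ℝ satisfying ∫_{T_0}^{T_1} u(t) dt = Δv and ∫_{T_0}^{T_1} (T_1 − t)·u(t) dt = Δq, one has ∫_{T_0}^{T_1} u(t)^2 dt ≥ ∫_{T_0}^{T_1} u*(t)^2 dt. -/

import Mathlib

lemma poly_int (c2 c1 c0 T0 T1 : ℝ) :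
    (∫ t in T0..T1, (c2 * t ^ 2 + c1 * t + c0)) =
      c2 * (T1 ^ 3 - T0 ^ 3) / 3 + c1 * (T1 ^ 2 - T0 ^ 2) / 2 + c0 * (T1 - T0) := by
  have h1 : IntervalIntegrable (fun t : ℝ => c2 * t ^ 2) MeasureTheory.volume T0 T1 :=
    (continuous_const.mul (continuous_pow 2)).intervalIntegrable _ _
  have h2 : IntervalIntegrable (fun t : ℝ => c1 * t) MeasureTheory.volume T0 T1 :=
    (continuous_const.mul continuous_id).intervalIntegrable _ _
  have h3 : IntervalIntegrable (fun _ : ℝ => c0) MeasureTheory.volume T0 T1 :=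
    intervalIntegrable_const
  rw [intervalIntegral.integral_add (h1.add h2) h3,
    intervalIntegral.integral_add h1 h2,
    intervalIntegral.integral_const_mul, intervalIntegral.integral_const_mul,
    integral_pow, integral_id, intervalIntegral.integral_const]
  simp only [smul_eq_mul]
  push_cast
  ring

/-- Unconstrained solution of the energy minimization problem (Problem 4): among
all continuous controls meeting the two integral (boundary-state) constraints,
an affine control u*(t) = a·t + b exists meeting them and minimizes ∫ u². -/
theorem stmt_13
    (T₀ T₁ : ℝ) (hT : T₀ < T₁) (Δv Δq : ℝ) :
    ∃ a b : ℝ,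
      (∫ t in T₀..T₁, (a * t + b)) = Δv ∧
      (∫ t in T₀..T₁, (T₁ - t) * (a * t + b)) = Δq ∧
      ∀ u : ℝ → ℝ, ContinuousOn u (Set.Icc T₀ T₁) →
        (∫ t in T₀..T₁, u t) = Δv →
        (∫ t in T₀..T₁, (T₁ - t) * u t) = Δq →
        (∫ t in T₀..T₁, (u t) ^ 2) ≥ ∫ t in T₀..T₁, (a * t + b) ^ 2 := by
  set τ : ℝ := T₁ - T₀ with hτdef
  have hτ : τ ≠ 0 := by simp [hτdef]; linarith
  set a : ℝ := (6 * Δv * τ - 12 * Δq) / τ ^ 3 with ha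
  set b : ℝ := (4 * Δv * τ - 6 * Δq) / τ ^ 2 - T₁ * ((6 * Δv * τ - 12 * Δq) / τ ^ 3) with hb
  -- the two constraint evaluations for any affine function, as polynomial integrals
  have key1 : ∀ c d : ℝ, (∫ t in T₀..T₁, (c * t + d)) =
      c * (T₁ ^ 2 - T₀ ^ 2) / 2 + d * (T₁ - T₀) := by
    intro c d
    have := poly_int 0 c d T₀ T₁
    simpa using this
  have key2 : ∀ c d : ℝ, (∫ t in T₀..T₁, (T₁ - t) * (c * t + d)) =
      (-c) * (T₁ ^ 3 - T₀ ^ 3) / 3 + (c * T₁ - d) * (T₁ ^ 2 - T₀ ^ 2) / 2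
        + d * T₁ * (T₁ - T₀) := by
    intro c d
    have heq : (fun t : ℝ => (T₁ - t) * (c * t + d)) =
        fun t : ℝ => (-c) * t ^ 2 + (c * T₁ - d) * t + d * T₁ := by
      funext t; ring
    rw [heq, poly_int]
  have hc1 : (∫ t in T₀..T₁, (a * t + b)) = Δv := by
    rw [key1, ha, hb, hτdef]
    field_simp [sub_ne_zero.mpr (ne_of_gt hT)]
    ring
  have hc2 : (∫ t in T₀..T₁, (T₁ - t) * (a * t + b)) = Δq := by
    rw [key2, ha, hb, hτdef]
    field_simp [sub_ne_zero.mpr (ne_of_gt hT)]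
    ring
  refine ⟨a, b, hc1, hc2, ?_⟩
  intro u hu hu1 hu2
  have hle : T₀ ≤ T₁ := le_of_lt hT
  have huI : IntervalIntegrable u MeasureTheory.volume T₀ T₁ := by
    apply ContinuousOn.intervalIntegrable
    rwa [Set.uIcc_of_le hle]
  have hstar : Continuous fun t : ℝ => a * t + b := (continuous_const.mul continuous_id).add continuous_const
  have hstarI : IntervalIntegrable (fun t : ℝ => a * t + b) MeasureTheory.volume T₀ T₁ :=
    hstar.intervalIntegrable _ _
  -- cross integral: ∫ u·u* = -a·Δq + (a·T₁+b)·Δv, for both u and u* itself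
  have cross : ∀ w : ℝ → ℝ, IntervalIntegrable w MeasureTheory.volume T₀ T₁ →
      IntervalIntegrable (fun t => (T₁ - t) * w t) MeasureTheory.volume T₀ T₁ →
      (∫ t in T₀..T₁, w t) = Δv → (∫ t in T₀..T₁, (T₁ - t) * w t) = Δq →
      (∫ t in T₀..T₁, w t * (a * t + b)) = (-a) * Δq + (a * T₁ + b) * Δv := by
    intro w hwI hwI2 hw1 hw2
    have heq : (fun t : ℝ => w t * (a * t + b)) =
        fun t : ℝ => (-a) * ((T₁ - t) * w t) + (a * T₁ + b) * w t := by
      funext t; ring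
    rw [heq, intervalIntegral.integral_add ((hwI2).const_mul _) (hwI.const_mul _),
      intervalIntegral.integral_const_mul, intervalIntegral.integral_const_mul, hw1, hw2]
  have hstarI2 : IntervalIntegrable (fun t => (T₁ - t) * (a * t + b))
      MeasureTheory.volume T₀ T₁ :=
    (((continuous_const.sub continuous_id).mul hstar)).intervalIntegrable _ _
  have huI2 : IntervalIntegrable (fun t => (T₁ - t) * u t) MeasureTheory.volume T₀ T₁ := by
    apply ContinuousOn.intervalIntegrable
    rw [Set.uIcc_of_le hle]
    exact (Continuous.continuousOn (continuous_const.sub continuous_id)).mul hu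
  have cu : (∫ t in T₀..T₁, u t * (a * t + b)) = (-a) * Δq + (a * T₁ + b) * Δv :=
    cross u huI huI2 hu1 hu2
  have cs : (∫ t in T₀..T₁, (a * t + b) * (a * t + b)) = (-a) * Δq + (a * T₁ + b) * Δv :=
    cross _ hstarI hstarI2 hc1 hc2
  -- integrability of squares and products
  have husq : IntervalIntegrable (fun t => (u t) ^ 2) MeasureTheory.volume T₀ T₁ := by
    apply ContinuousOn.intervalIntegrable
    rw [Set.uIcc_of_le hle]
    exact hu.pow 2
  have hssq : IntervalIntegrable (fun t => (a * t + b) ^ 2) MeasureTheory.volume T₀ T₁ :=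
    (hstar.pow 2).intervalIntegrable _ _
  have hprod : IntervalIntegrable (fun t => u t * (a * t + b)) MeasureTheory.volume T₀ T₁ := by
    apply ContinuousOn.intervalIntegrable
    rw [Set.uIcc_of_le hle]
    exact hu.mul (Continuous.continuousOn hstar)
  -- nonnegativity of ∫ (u - u*)²
  have hnn : (0 : ℝ) ≤ ∫ t in T₀..T₁, (u t - (a * t + b)) ^ 2 := by
    apply intervalIntegral.integral_nonneg hle
    intro t _
    positivity
  have hexp : (∫ t in T₀..T₁, (u t - (a * t + b)) ^ 2) =
      (∫ t in T₀..T₁, (u t) ^ 2) - 2 * (∫ t in T₀..T₁, u t * (a * t + b))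
        + ∫ t in T₀..T₁, (a * t + b) ^ 2 := by
    have heq : (fun t : ℝ => (u t - (a * t + b)) ^ 2) =
        fun t : ℝ => (u t) ^ 2 - 2 * (u t * (a * t + b)) + (a * t + b) ^ 2 := by
      funext t; ring
    rw [heq, intervalIntegral.integral_add (husq.sub (hprod.const_mul 2)) hssq,
      intervalIntegral.integral_sub husq (hprod.const_mul 2),
      intervalIntegral.integral_const_mul]
  have h2 : (∫ t in T₀..T₁, (a * t + b) ^ 2)
      = ∫ t in T₀..T₁, (a * t + b) * (a * t + b) := by
    congr 1; funext t; ring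
  rw [hexp, h2, cu, cs] at hnn
  rw [ge_iff_le, h2, cs, ← cu]
  linarith
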